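/- Consider an MPNN+VN where the virtual-node update is h_vn^(ℓ+1) = σ(Ω_vn h_vn^(ℓ) + W_vn · (1/n)Σ_j h_j^(ℓ)) and the node update is h_i^(ℓ+1) = σ(Ω h_i^(ℓ) + Σ_j A_{ij} ψ(h_i^(ℓ), h_j^(ℓ)) + ψ_vn(h_i^(ℓ), h_vn^(ℓ))). Then for any two nodes i, k at graph distance greater than 2, the Jacobian ∂h_i^(ℓ+1)/∂h_k^(ℓ-1) equals (1/n)·diag(σ'(z_i^(ℓ)))·∇_2 ψ_vn(h_i^(ℓ), h_vn^(ℓ))·diag(σ'(z_vn^(ℓ-1)))·W_vn, which is independent of k. -/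

import Mathlib

open Matrix

/-- Sensitivity analysis of MPNN + VN: the virtual-node update is
`h_vn⁽ℓ⁾ = σ(Ω_vn h_vn⁽ℓ⁻¹⁾ + W_vn·(1/n)∑_j h_j⁽ℓ⁻¹⁾)` and the node update is
`h_i⁽ℓ⁺¹⁾ = σ(Ω h_i⁽ℓ⁾ + ∑_j A_ij ψ(h_i⁽ℓ⁾, h_j⁽ℓ⁾) + ψ_vn(h_i⁽ℓ⁾, h_vn⁽ℓ⁾))`.
For nodes `i, k` at graph distance greater than 2 (no edge `i–k` and no common
neighbor), the Jacobian `∂h_i⁽ℓ⁺¹⁾/∂h_k⁽ℓ⁻¹⁾` equals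
`(1/n)·diag(σ'(z_i⁽ℓ⁾))·∇₂ψ_vn(h_i⁽ℓ⁾,h_vn⁽ℓ⁾)·diag(σ'(z_vn⁽ℓ⁻¹⁾))·W_vn`,
a formula independent of `k`. -/
theorem mpnn_vn_jacobian_homogeneous
    (n d : ℕ) (hn : 0 < n)
    (A : Matrix (Fin n) (Fin n) ℝ)
    (σ : ℝ → ℝ) (hσ : Differentiable ℝ σ)
    (Ω Ωvn Wvn : Matrix (Fin d) (Fin d) ℝ)
    (ψ ψvn : (Fin d → ℝ) → (Fin d → ℝ) → (Fin d → ℝ))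
    (hψ : Differentiable ℝ (fun p : (Fin d → ℝ) × (Fin d → ℝ) => ψ p.1 p.2))
    (hψvn : Differentiable ℝ (fun p : (Fin d → ℝ) × (Fin d → ℝ) => ψvn p.1 p.2))
    -- layer ℓ-1 states of the nodes and of the virtual node
    (H : Fin n → Fin d → ℝ) (hvn : Fin d → ℝ)
    (i k : Fin n) (hik : i ≠ k)
    -- distance between i and k greater than 2:
    (hAik : A i k = 0)
    (hno_common : ∀ j : Fin n, A i j ≠ 0 → A j k = 0 ∧ j ≠ k) :
    -- layer ℓ node states and VN state, as functions of node k's layer ℓ-1 state x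
    ∀ w : Fin d → ℝ,
      fderiv ℝ
        (fun x : Fin d → ℝ =>
          -- layer ℓ states computed from the layer ℓ-1 states with h_k⁽ℓ⁻¹⁾ = x
          let Hs : Fin n → Fin d → ℝ := Function.update H k x
          let hl : Fin n → Fin d → ℝ := fun j a =>
            σ ((Ω.mulVec (Hs j) + (∑ u, A j u • ψ (Hs j) (Hs u))
                + ψvn (Hs j) hvn) a)
          let hvnl : Fin d → ℝ := fun a =>
            σ ((Ωvn.mulVec hvn + Wvn.mulVec (((1 : ℝ) / n) • ∑ j, Hs j)) a)
          -- layer ℓ+1 state of node i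
          fun a => σ ((Ω.mulVec (hl i) + (∑ u, A i u • ψ (hl i) (hl u))
              + ψvn (hl i) hvnl) a))
        (H k) w
      =
      -- the layer ℓ states at the base point x = H k
      (let hl0 : Fin n → Fin d → ℝ := fun j a =>
        σ ((Ω.mulVec (H j) + (∑ u, A j u • ψ (H j) (H u)) + ψvn (H j) hvn) a)
      let zvn : Fin d → ℝ :=
        Ωvn.mulVec hvn + Wvn.mulVec (((1 : ℝ) / n) • ∑ j, H j)
      let hvnl0 : Fin d → ℝ := fun a => σ (zvn a)
      let zi : Fin d → ℝ :=
        Ω.mulVec (hl0 i) + (∑ u, A i u • ψ (hl0 i) (hl0 u)) + ψvn (hl0 i) hvnl0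
      ((1 : ℝ) / n) • fun a =>
        deriv σ (zi a) *
          (fderiv ℝ (fun y => ψvn (hl0 i) y) hvnl0
            (fun b => deriv σ (zvn b) * Wvn.mulVec w b)) a) := by
  classical
  intro w
  have hσd : ∀ z : ℝ, HasDerivAt σ (deriv σ z) z := fun z => (hσ z).hasDerivAt
  conv_rhs => dsimp only
  -- abbreviations matching the RHS
  set zvn : Fin d → ℝ := Ωvn.mulVec hvn + Wvn.mulVec (((1 : ℝ) / n) • ∑ j, H j) with hzvn
  set hvnl0 : Fin d → ℝ := fun a => σ (zvn a) with hhvnl0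
  set c1 : Fin d → ℝ := fun a =>
    σ ((Ω.mulVec (H i) + (∑ u, A i u • ψ (H i) (H u)) + ψvn (H i) hvn) a) with hc1
  set S : Fin d → ℝ := ∑ u, A i u • ψ c1
    (fun a => σ ((Ω.mulVec (H u) + (∑ v, A u v • ψ (H u) (H v)) + ψvn (H u) hvn) a)) with hS
  set zi : Fin d → ℝ := Ω.mulVec c1 + S + ψvn c1 hvnl0 with hzi
  set LΨ : (Fin d → ℝ) →L[ℝ] (Fin d → ℝ) := fderiv ℝ (fun y => ψvn c1 y) hvnl0 with hLΨ
  -- the constant part of the mean aggregation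
  set C : Fin d → ℝ := ∑ j ∈ Finset.univ \ {k}, H j with hC
  have hsumHk : H k + C = ∑ j, H j := by
    rw [hC, Finset.sdiff_singleton_eq_erase]
    exact Finset.add_sum_erase _ _ (Finset.mem_univ k)
  have hsum_update : ∀ x : Fin d → ℝ, ∑ j, Function.update H k x j = x + C :=
    fun x => Finset.sum_update_of_mem (Finset.mem_univ k) _ _
  -- the two composed maps
  set F : (Fin d → ℝ) → (Fin d → ℝ) := fun v a => σ ((Ω.mulVec c1 + S + ψvn c1 v) a) with hF
  set G : (Fin d → ℝ) → (Fin d → ℝ) := fun x a =>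
    σ ((Ωvn.mulVec hvn + Wvn.mulVec (((1 : ℝ) / n) • (x + C))) a) with hG
  have hGHk : G (H k) = hvnl0 := by
    funext a
    show σ ((Ωvn.mulVec hvn + Wvn.mulVec (((1 : ℝ) / n) • (H k + C))) a) = hvnl0 a
    rw [hsumHk]
  -- nodes at distance ≤ 1 from i are insensitive to x
  have key : ∀ j : Fin n, j ≠ k → A j k = 0 → ∀ x : Fin d → ℝ,
      (fun a => σ ((Ω.mulVec (Function.update H k x j)
          + (∑ u, A j u • ψ (Function.update H k x j) (Function.update H k x u))
          + ψvn (Function.update H k x j) hvn) a))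
        = fun a => σ ((Ω.mulVec (H j) + (∑ u, A j u • ψ (H j) (H u)) + ψvn (H j) hvn) a) := by
    intro j hjk hAjk x
    have hupd : Function.update H k x j = H j := Function.update_of_ne hjk _ _
    have hsum : (∑ u, A j u • ψ (H j) (Function.update H k x u))
        = ∑ u, A j u • ψ (H j) (H u) := by
      refine Finset.sum_congr rfl fun u _ => ?_
      by_cases hu : u = k
      · subst hu; rw [hAjk]; simp
      · rw [Function.update_of_ne hu]
    rw [hupd, hsum]
  -- the function in the statement equals F ∘ G
  have hEq : (fun x : Fin d → ℝ =>
        let Hs : Fin n → Fin d → ℝ := Function.update H k x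
        let hl : Fin n → Fin d → ℝ := fun j a =>
          σ ((Ω.mulVec (Hs j) + (∑ u, A j u • ψ (Hs j) (Hs u))
              + ψvn (Hs j) hvn) a)
        let hvnl : Fin d → ℝ := fun a =>
          σ ((Ωvn.mulVec hvn + Wvn.mulVec (((1 : ℝ) / n) • ∑ j, Hs j)) a)
        fun a => σ ((Ω.mulVec (hl i) + (∑ u, A i u • ψ (hl i) (hl u))
            + ψvn (hl i) hvnl) a))
      = F ∘ G := by
    funext x
    dsimp only [Function.comp]
    have hki := (key i hik hAik x).trans hc1.symm
    rw [hki]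
    have hSsum : (∑ u, A i u • ψ c1
        (fun a => σ ((Ω.mulVec (Function.update H k x u)
          + (∑ v, A u v • ψ (Function.update H k x u) (Function.update H k x v))
          + ψvn (Function.update H k x u) hvn) a))) = S := by
      rw [hS]
      refine Finset.sum_congr rfl fun u _ => ?_
      by_cases hu : A i u = 0
      · rw [hu]; simp
      · obtain ⟨h1, h2⟩ := hno_common u hu
        rw [key u h2 h1 x]
    rw [hSsum]
    have hGx : (fun a =>
        σ ((Ωvn.mulVec hvn + Wvn.mulVec (((1 : ℝ) / n) • ∑ j, Function.update H k x j)) a))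
        = G x := by
      rw [hG, hsum_update x]
    rw [hGx, hF]
  rw [hEq]
  -- the matrix Wvn as a continuous linear map
  set M : (Fin d → ℝ) →L[ℝ] (Fin d → ℝ) := LinearMap.toContinuousLinearMap Wvn.mulVecLin with hM
  have hMapp : ∀ v, M v = Wvn.mulVec v := by
    intro v; rw [hM]; simp [Matrix.mulVecLin_apply]
  -- derivative of G
  set LG : (Fin d → ℝ) →L[ℝ] (Fin d → ℝ) :=
    ContinuousLinearMap.pi (fun b =>
      deriv σ (zvn b) • (((1 : ℝ) / n) • ((ContinuousLinearMap.proj b).comp M))) with hLG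
  have hGd : HasFDerivAt G LG (H k) := by
    rw [hG, hLG]
    refine hasFDerivAt_pi.2 fun b => ?_
    have h1 : HasFDerivAt
        (fun x : Fin d → ℝ => (Ωvn.mulVec hvn + Wvn.mulVec (((1 : ℝ) / n) • (x + C))) b)
        (((1 : ℝ) / n) • ((ContinuousLinearMap.proj b).comp M)) (H k) := by
      have hlin : HasFDerivAt (fun x : Fin d → ℝ => M x b)
          ((ContinuousLinearMap.proj b).comp M) (H k) :=
        ((ContinuousLinearMap.proj b).comp M).hasFDerivAt
      have h3 := ((hlin.const_mul ((1 : ℝ) / n)).add_const ((1 : ℝ) / n * M C b)).const_add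
        (Ωvn.mulVec hvn b)
      have hfeq : (fun x : Fin d → ℝ =>
            (Ωvn.mulVec hvn + Wvn.mulVec (((1 : ℝ) / n) • (x + C))) b)
          = fun x => Ωvn.mulVec hvn b + ((1 : ℝ) / n * M x b + (1 : ℝ) / n * M C b) := by
        funext x
        simp [hMapp, Matrix.mulVec_smul, Matrix.mulVec_add, Pi.add_apply, Pi.smul_apply,
          smul_eq_mul, mul_add]
      rw [hfeq]; exact h3
    have hpt : (Ωvn.mulVec hvn + Wvn.mulVec (((1 : ℝ) / n) • (H k + C))) b = zvn b := by
      rw [hsumHk, hzvn]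
    have h4 := (hσd ((Ωvn.mulVec hvn + Wvn.mulVec (((1 : ℝ) / n) • (H k + C))) b)).comp_hasFDerivAt
      (H k) h1
    rw [hpt] at h4
    exact h4
  -- derivative of F
  have hΨdiff : Differentiable ℝ (fun y : Fin d → ℝ => ψvn c1 y) := fun y =>
    (hψvn (c1, y)).comp y (DifferentiableAt.prodMk (differentiableAt_const c1) differentiableAt_id)
  have hLΨd : HasFDerivAt (fun y : Fin d → ℝ => ψvn c1 y) LΨ hvnl0 := by
    rw [hLΨ]; exact (hΨdiff hvnl0).hasFDerivAt
  set LF : (Fin d → ℝ) →L[ℝ] (Fin d → ℝ) :=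
    ContinuousLinearMap.pi (fun a =>
      deriv σ (zi a) • ((ContinuousLinearMap.proj a).comp LΨ)) with hLF
  have hFd : HasFDerivAt F LF hvnl0 := by
    rw [hF, hLF]
    refine hasFDerivAt_pi.2 fun a => ?_
    have h1 : HasFDerivAt (fun v : Fin d → ℝ => (Ω.mulVec c1 + S + ψvn c1 v) a)
        ((ContinuousLinearMap.proj a).comp LΨ) hvnl0 := by
      have h2 : HasFDerivAt (fun v : Fin d → ℝ => ψvn c1 v a)
          ((ContinuousLinearMap.proj a).comp LΨ) hvnl0 :=
        (ContinuousLinearMap.proj a (R := ℝ) (φ := fun _ : Fin d => ℝ)).hasFDerivAt.comp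
          hvnl0 hLΨd
      have hfe : (fun v : Fin d → ℝ => (Ω.mulVec c1 + S + ψvn c1 v) a)
          = fun v => (Ω.mulVec c1 a + S a) + ψvn c1 v a := by
        funext v; simp [Pi.add_apply]
      rw [hfe]
      exact h2.const_add _
    have h4 := (hσd ((Ω.mulVec c1 + S + ψvn c1 hvnl0) a)).comp_hasFDerivAt hvnl0 h1
    rw [← hzi] at h4
    exact h4
  -- combine
  have hFGd : HasFDerivAt (F ∘ G) (LF.comp LG) (H k) := by
    refine HasFDerivAt.comp (H k) ?_ hGd
    rw [hGHk]; exact hFd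
  rw [hFGd.fderiv]
  -- evaluate
  have hLGw : LG w = ((1 : ℝ) / n) • fun b => deriv σ (zvn b) * Wvn.mulVec w b := by
    funext b
    simp [hLG, hMapp, smul_eq_mul, Pi.smul_apply]
    ring
  have hLFu : ∀ u : Fin d → ℝ, LF u = fun a => deriv σ (zi a) * LΨ u a := by
    intro u; funext a
    simp [hLF, smul_eq_mul]
  rw [ContinuousLinearMap.comp_apply, hLGw, ContinuousLinearMap.map_smul, hLFu]
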